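/- Every infinite 7/3-free binary word contains the factor μ^i(0) and the factor μ^i(1) for all i ≥ 0, where μ is the Thue–Morse morphism. -/

import Mathlib

/-- An infinite binary word is 7/3-free if it contains no finite factor of
exponent ≥ 7/3, i.e. no factor of length `n` with a period `p` with `3n ≥ 7p`. -/
def SevenThirdsFree (x : ℕ → Fin 2) : Prop :=
  ¬ ∃ i n p : ℕ, 1 ≤ p ∧ p ≤ n ∧ 3 * n ≥ 7 * p ∧
      ∀ j : ℕ, j + p < n → x (i + j) = x (i + j + p)

/-- The Thue–Morse morphism applied to a finite binary word. -/
def muList (w : List (Fin 2)) : List (Fin 2) :=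
  w.flatMap fun a => [a, 1 - a]

/-- The finite word `L` occurs as a factor of the infinite word `x`. -/
def Occurs (L : List (Fin 2)) (x : ℕ → Fin 2) : Prop :=
  ∃ j : ℕ, ∀ m < L.length, x (j + m) = L.getD m 0

lemma fin2_ne : ∀ a b c : Fin 2, a ≠ b → c ≠ b → a = c := by decide

lemma fin2_comp : ∀ a b : Fin 2, ¬(b = 1 - a) → a = b := by decide

/-- In a 7/3-free word, every window of length 5 contains an equal pair. -/
lemma pairs_close (x : ℕ → Fin 2) (hx : SevenThirdsFree x) (n : ℕ) :
    ∃ k ≤ 3, x (n + k) = x (n + k + 1) := by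
  by_contra h
  push_neg at h
  apply hx
  refine ⟨n, 5, 2, by omega, by omega, by omega, ?_⟩
  intro j hj
  have hjb : j < 3 := by omega
  interval_cases j
  · exact fin2_ne _ _ _ (h 0 (by omega)) (Ne.symm (h 1 (by omega)))
  · exact fin2_ne _ _ _ (h 1 (by omega)) (Ne.symm (h 2 (by omega)))
  · exact fin2_ne _ _ _ (h 2 (by omega)) (Ne.symm (h 3 (by omega)))

/-- No cubes `aaa`. -/
lemma no_gap1 (x : ℕ → Fin 2) (hx : SevenThirdsFree x) (n : ℕ)
    (h1 : x n = x (n+1)) (h2 : x (n+1) = x (n+2)) : False := by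
  apply hx
  refine ⟨n, 3, 1, by omega, by omega, by omega, ?_⟩
  intro j hj
  have hjb : j < 2 := by omega
  interval_cases j
  · exact h1
  · exact h2

/-- Consecutive equal pairs at distance 3, not at the very start, are impossible. -/
lemma no_gap3 (x : ℕ → Fin 2) (hx : SevenThirdsFree x) (m : ℕ)
    (h1 : x (m+1) = x (m+2)) (h2 : x (m+2) ≠ x (m+3))
    (h3 : x (m+3) ≠ x (m+4)) (h4 : x (m+4) = x (m+5)) : False := by
  by_cases hL : x m = x (m+1)
  · exact no_gap1 x hx m hL h1
  by_cases hR : x (m+5) = x (m+6)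
  · exact no_gap1 x hx (m+4) h4 hR
  apply hx
  refine ⟨m, 7, 3, by omega, by omega, by omega, ?_⟩
  have e1 : x m = x (m+3) := by
    refine fin2_ne _ _ _ hL ?_
    rw [h1]; exact Ne.symm h2
  have e24 : x (m+2) = x (m+4) := fin2_ne _ _ _ h2 (Ne.symm h3)
  have e2 : x (m+1) = x (m+4) := h1.trans e24
  have e3 : x (m+2) = x (m+5) := e24.trans h4
  have e4 : x (m+3) = x (m+6) := by
    refine fin2_ne _ _ _ h3 ?_
    rw [h4]; exact fun hh => hR hh.symm
  intro j hj
  have hjb : j < 4 := by omega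
  interval_cases j
  · exact e1
  · exact e2
  · exact e3
  · exact e4

/-- All equal pairs at positions ≥ 1 lie at positions of the same parity. -/
lemma pair_parity (x : ℕ → Fin 2) (hx : SevenThirdsFree x) :
    ∀ d n, 1 ≤ n → x n = x (n+1) → x (n+d) = x (n+d+1) → d % 2 = 0 := by
  intro d
  induction d using Nat.strong_induction_on with
  | _ d ih =>
  intro n hn hpn hpm
  rcases Nat.lt_or_ge d 2 with hd | hd
  · interval_cases d
    · rfl
    · exact (no_gap1 x hx n hpn hpm).elim
  by_cases h1 : x (n+1) = x (n+2)
  · exact (no_gap1 x hx n hpn h1).elim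
  by_cases h2 : x (n+2) = x (n+3)
  · have hpm' : x (n+2+(d-2)) = x (n+2+(d-2)+1) := by
      rw [show n+2+(d-2) = n+d from by omega]; exact hpm
    have := ih (d-2) (by omega) (n+2) (by omega) h2 hpm'
    omega
  by_cases h3 : x (n+3) = x (n+4)
  · obtain ⟨m, rfl⟩ : ∃ m, n = m + 1 := ⟨n-1, by omega⟩
    exact (no_gap3 x hx m hpn h1 h2 h3).elim
  by_cases h4 : x (n+4) = x (n+5)
  · rcases Nat.lt_or_ge d 4 with hd4 | hd4
    · interval_cases d
      · exact (h2 hpm).elim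
      · exact (h3 hpm).elim
    · have hpm' : x (n+4+(d-4)) = x (n+4+(d-4)+1) := by
        rw [show n+4+(d-4) = n+d from by omega]; exact hpm
      have := ih (d-4) (by omega) (n+4) (by omega) h4 hpm'
      omega
  · obtain ⟨k, hk3, hpk⟩ := pairs_close x hx (n+1)
    interval_cases k
    · exact (h1 hpk).elim
    · exact (h2 hpk).elim
    · exact (h3 hpk).elim
    · exact (h4 hpk).elim

/-- De-substitution: after some offset `o`, the word splits into blocks `a(1-a)`. -/
lemma decomp (x : ℕ → Fin 2) (hx : SevenThirdsFree x) :
    ∃ o, ∀ k, x (o + 2*k + 1) = 1 - x (o + 2*k) := by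
  obtain ⟨k0, hk0, hp0⟩ := pairs_close x hx 1
  refine ⟨1 + (1 + k0) % 2, fun k => ?_⟩
  set q := 1 + (1 + k0) % 2 + 2 * k with hq
  by_contra hne
  have hpq : x q = x (q + 1) := fin2_comp _ _ hne
  rcases le_or_gt (1 + k0) q with h | h
  · have hper : x ((1+k0) + (q - (1+k0))) = x ((1+k0) + (q - (1+k0)) + 1) := by
      rw [show (1+k0) + (q - (1+k0)) = q from by omega]; exact hpq
    have := pair_parity x hx (q - (1+k0)) (1+k0) (by omega) hp0 hper
    omega
  · have hper : x (q + ((1+k0) - q)) = x (q + ((1+k0) - q) + 1) := by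
      rw [show q + ((1+k0) - q) = 1+k0 from by omega]; exact hp0
    have := pair_parity x hx ((1+k0) - q) q (by omega) hpq hper
    omega

/-- The de-substituted word is 7/3-free. -/
lemma free_sub (x : ℕ → Fin 2) (hx : SevenThirdsFree x) (o : ℕ)
    (hb : ∀ k, x (o + 2*k + 1) = 1 - x (o + 2*k)) :
    SevenThirdsFree (fun k => x (o + 2*k)) := by
  rintro ⟨i, n, p, hp1, hpn, h73, hper⟩
  apply hx
  refine ⟨o + 2*i, 2*n, 2*p, by omega, by omega, by omega, ?_⟩
  intro j hj
  rcases Nat.even_or_odd j with ⟨j', rfl⟩ | ⟨j', rfl⟩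
  · rw [show o+2*i+(j'+j') = o + 2*(i+j') from by ring,
        show o + 2*(i+j') + 2*p = o + 2*(i+j'+p) from by ring]
    exact hper j' (by omega)
  · rw [show o+2*i+(2*j'+1) = o + 2*(i+j') + 1 from by ring,
        show o + 2*(i+j') + 1 + 2*p = o + 2*(i+j'+p) + 1 from by ring,
        hb (i+j'), hb (i+j'+p)]
    have h' : x (o + 2*(i+j')) = x (o + 2*(i+j'+p)) := hper j' (by omega)
    rw [h']

lemma muList_cons (a : Fin 2) (l : List (Fin 2)) :
    muList (a :: l) = a :: (1 - a) :: muList l := rfl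

lemma muList_len (L : List (Fin 2)) : (muList L).length = 2 * L.length := by
  induction L with
  | nil => rfl
  | cons a l ih => rw [muList_cons]; simp [ih]; omega

lemma muList_getD_even (L : List (Fin 2)) :
    ∀ m, (muList L).getD (2*m) 0 = L.getD m 0 := by
  induction L with
  | nil => intro m; rfl
  | cons a l ih =>
    intro m
    cases m with
    | zero => rfl
    | succ m =>
      rw [muList_cons, show 2*(m+1) = 2*m+1+1 from by ring]
      simp only [List.getD_cons_succ]
      exact ih m

lemma muList_getD_odd (L : List (Fin 2)) :
    ∀ m, m < L.length → (muList L).getD (2*m+1) 0 = 1 - L.getD m 0 := by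
  induction L with
  | nil => intro m hm; simp at hm
  | cons a l ih =>
    intro m hm
    cases m with
    | zero => rfl
    | succ m =>
      rw [muList_cons, show 2*(m+1)+1 = 2*m+1+1+1 from by ring]
      simp only [List.getD_cons_succ]
      exact ih m (by simp at hm; omega)

lemma occurs_mu (x : ℕ → Fin 2) (o : ℕ)
    (hb : ∀ k, x (o + 2*k + 1) = 1 - x (o + 2*k)) (L : List (Fin 2))
    (h : Occurs L (fun k => x (o + 2*k))) : Occurs (muList L) x := by
  obtain ⟨j, hj⟩ := h
  refine ⟨o + 2*j, ?_⟩
  intro m hm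
  rw [muList_len] at hm
  rcases Nat.even_or_odd m with ⟨m', rfl⟩ | ⟨m', rfl⟩
  · rw [show o+2*j+(m'+m') = o + 2*(j+m') from by ring,
        show m'+m' = 2*m' from by ring, muList_getD_even]
    exact hj m' (by omega)
  · rw [show o+2*j+(2*m'+1) = o + 2*(j+m') + 1 from by ring,
        hb (j+m'), muList_getD_odd L m' (by omega)]
    have h' : x (o + 2*(j+m')) = L.getD m' 0 := hj m' (by omega)
    rw [h']

lemma occurs_single (x : ℕ → Fin 2) (hx : SevenThirdsFree x) (a : Fin 2) :
    Occurs [a] x := by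
  have h : ∃ j, x j = a := by
    by_contra h
    push_neg at h
    apply hx
    refine ⟨0, 3, 1, by omega, by omega, by omega, ?_⟩
    intro j hj
    exact fin2_ne _ _ _ (h (0+j)) (h (0+j+1))
  obtain ⟨j, hj⟩ := h
  refine ⟨j, ?_⟩
  intro m hm
  simp only [List.length_singleton] at hm
  interval_cases m
  exact hj

/-- Every infinite 7/3-free binary word contains μ^i(0) and μ^i(1) as factors
for all i ≥ 0. -/
theorem seventhirds_free_contains_mu_powers (x : ℕ → Fin 2)
    (hx : SevenThirdsFree x) (i : ℕ) :
    Occurs (muList^[i] [0]) x ∧ Occurs (muList^[i] [1]) x := by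
  induction i generalizing x with
  | zero =>
    simp only [Function.iterate_zero, id_eq]
    exact ⟨occurs_single x hx 0, occurs_single x hx 1⟩
  | succ i ih =>
    obtain ⟨o, hb⟩ := decomp x hx
    have hy := free_sub x hx o hb
    obtain ⟨H0, H1⟩ := ih _ hy
    simp only [Function.iterate_succ_apply']
    exact ⟨occurs_mu x o hb _ H0, occurs_mu x o hb _ H1⟩
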